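/- Let F be a finite field with p^f > 3 elements, q an odd prime dividing p^f - 1, and B = ⟨b⟩ cyclic of order q. The subgroup V₊(FB) of symmetric normalized units (units u with u* = u) has order (p^f - 1)^((q-1)/2). -/

import Mathlib

open MonoidAlgebra

noncomputable def aug (F : Type*) [CommSemiring F] (G : Type*) [Monoid G] :
    MonoidAlgebra F G →ₐ[F] F := MonoidAlgebra.lift F F G 1

noncomputable def invo (F : Type*) [CommSemiring F] (G : Type*) [Group G] :
    MonoidAlgebra F G → MonoidAlgebra F G := fun x => MonoidAlgebra.mapDomain (·⁻¹) x

noncomputable def normUnits (F : Type*) [CommSemiring F] (G : Type*) [Monoid G] :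
    Subgroup (MonoidAlgebra F G)ˣ :=
  (Units.map (aug F G : MonoidAlgebra F G →* F)).ker

noncomputable def grpUnit (F : Type*) [CommSemiring F] (G : Type*) [Group G] :
    G →* (MonoidAlgebra F G)ˣ where
  toFun g :=
    { val := MonoidAlgebra.of F G g
      inv := MonoidAlgebra.of F G g⁻¹
      val_inv := by rw [← map_mul, mul_inv_cancel, map_one]
      inv_val := by rw [← map_mul, inv_mul_cancel, map_one] }
  map_one' := Units.ext (map_one (MonoidAlgebra.of F G))
  map_mul' g h := Units.ext (map_mul (MonoidAlgebra.of F G) g h)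

/-! ### Auxiliary material -/

/-- Units of a pi type. -/
def myPiUnits {ι : Type*} {M : Type*} [CommMonoid M] : (ι → M)ˣ ≃ (ι → Mˣ) where
  toFun u i := ⟨u.val i, u.inv i, congrFun u.val_inv i, congrFun u.inv_val i⟩
  invFun v := ⟨fun i => (v i : M), fun i => ((v i)⁻¹ : Mˣ),
    funext fun i => Units.mul_inv (v i), funext fun i => Units.inv_mul (v i)⟩
  left_inv u := Units.ext rfl
  right_inv v := funext fun i => Units.ext rfl

@[simp] lemma myPiUnits_apply_val {ι : Type*} {M : Type*} [CommMonoid M]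
    (u : (ι → M)ˣ) (i : ι) : (myPiUnits u i : M) = (u : ι → M) i := rfl

section Phi

variable {F : Type*} [Field F] {q : ℕ} [NeZero q] {B : Type*} [Group B]

/-- The character of `B` attached to `k : ZMod q`, bundled over all `k`. -/
noncomputable def chi (σ : B ≃* Multiplicative (ZMod q)) (ψ : AddChar (ZMod q) F) :
    B →* (ZMod q → F) where
  toFun b k := ψ ((σ b).toAdd * k)
  map_one' := by
    funext k
    simp only [map_one, Pi.one_apply]
    rw [show ((1 : Multiplicative (ZMod q)).toAdd) = 0 from rfl, zero_mul,
      AddChar.map_zero_eq_one]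
  map_mul' a b := by
    funext k
    simp only [map_mul, Pi.mul_apply]
    rw [show ((σ a * σ b).toAdd) = (σ a).toAdd + (σ b).toAdd from rfl, add_mul,
      AddChar.map_add_eq_mul]

lemma chi_apply (σ : B ≃* Multiplicative (ZMod q)) (ψ : AddChar (ZMod q) F) (b : B)
    (k : ZMod q) : chi σ ψ b k = ψ ((σ b).toAdd * k) := rfl

/-- The discrete Fourier transform on the group algebra. -/
noncomputable def Phi (σ : B ≃* Multiplicative (ZMod q)) (ψ : AddChar (ZMod q) F) :
    MonoidAlgebra F B →ₐ[F] (ZMod q → F) :=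
  MonoidAlgebra.lift F (ZMod q → F) B (chi σ ψ)

lemma Phi_apply (σ : B ≃* Multiplicative (ZMod q)) (ψ : AddChar (ZMod q) F)
    (x : MonoidAlgebra F B) (k : ZMod q) :
    Phi σ ψ x k = x.coeff.sum fun g a => a * ψ ((σ g).toAdd * k) := by
  rw [Phi, MonoidAlgebra.lift_apply, Finsupp.sum_apply']
  refine Finsupp.sum_congr fun g _ => ?_
  rw [Pi.smul_apply, smul_eq_mul, chi_apply]

lemma sum_char {ψ : AddChar (ZMod q) F} (hψ : ψ.IsPrimitive) (m : ZMod q) :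
    ∑ k : ZMod q, ψ (m * k) = if m = 0 then (q : F) else 0 := by
  classical
  have h := AddChar.sum_mulShift m hψ
  simp_rw [mul_comm] at h
  rw [h]
  split_ifs <;> simp [ZMod.card]

lemma Phi_inversion (σ : B ≃* Multiplicative (ZMod q)) {ψ : AddChar (ZMod q) F}
    (hψ : ψ.IsPrimitive) (x : MonoidAlgebra F B) (b : B) :
    (q : F) * x.coeff b = ∑ k : ZMod q, Phi σ ψ x k * ψ (-(σ b).toAdd * k) := by
  classical
  simp_rw [Phi_apply, Finsupp.sum, Finset.sum_mul]
  rw [Finset.sum_comm]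
  have step : ∀ g ∈ x.coeff.support,
      (∑ k : ZMod q, x.coeff g * ψ ((σ g).toAdd * k) * ψ (-(σ b).toAdd * k)) =
        if g = b then x.coeff g * (q : F) else 0 := by
    intro g _
    have key : ∀ k : ZMod q, x.coeff g * ψ ((σ g).toAdd * k) * ψ (-(σ b).toAdd * k)
        = x.coeff g * ψ (((σ g).toAdd - (σ b).toAdd) * k) := by
      intro k
      rw [mul_assoc, ← AddChar.map_add_eq_mul, ← add_mul, ← sub_eq_add_neg]
    simp_rw [key]
    rw [← Finset.mul_sum, sum_char hψ]
    have hiff : ((σ g).toAdd - (σ b).toAdd = 0) ↔ g = b := by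
      rw [sub_eq_zero]
      constructor
      · intro h
        exact σ.injective (Multiplicative.toAdd.injective h)
      · rintro rfl; rfl
    by_cases hgb : g = b
    · rw [if_pos (hiff.mpr hgb), if_pos hgb]
    · rw [if_neg (fun h => hgb (hiff.mp h)), if_neg hgb, mul_zero]
  rw [Finset.sum_congr rfl step, Finset.sum_ite_eq' x.coeff.support b (fun g => x.coeff g * (q : F))]
  by_cases hb : b ∈ x.coeff.support
  · rw [if_pos hb, mul_comm]
  · rw [if_neg hb, Finsupp.notMem_support_iff.mp hb, mul_zero]

lemma Phi_invo (σ : B ≃* Multiplicative (ZMod q)) (ψ : AddChar (ZMod q) F)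
    (x : MonoidAlgebra F B) (k : ZMod q) :
    Phi σ ψ (invo F B x) k = Phi σ ψ x (-k) := by
  induction x using MonoidAlgebra.induction_linear with
  | zero => simp [invo]
  | add f g hf hg =>
      rw [invo] at hf hg ⊢
      rw [MonoidAlgebra.mapDomain_add, map_add, map_add, Pi.add_apply, Pi.add_apply, hf, hg]
  | single g a =>
      rw [invo]
      rw [show MonoidAlgebra.mapDomain (·⁻¹) (MonoidAlgebra.single g a) = MonoidAlgebra.single g⁻¹ a from
        MonoidAlgebra.mapDomain_single]
      have h1 : Phi σ ψ (MonoidAlgebra.single g⁻¹ a) = a • chi σ ψ g⁻¹ :=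
        MonoidAlgebra.lift_single _ _ _
      have h2 : Phi σ ψ (MonoidAlgebra.single g a) = a • chi σ ψ g :=
        MonoidAlgebra.lift_single _ _ _
      rw [h1, h2, Pi.smul_apply, Pi.smul_apply, smul_eq_mul, smul_eq_mul]
      congr 1
      rw [chi_apply, chi_apply, map_inv]
      rw [show (((σ g)⁻¹).toAdd) = -((σ g).toAdd) from rfl, neg_mul, ← mul_neg]

end Phi

lemma card_reps {q : ℕ} [NeZero q] (hq : q.Prime) (hodd : Odd q) :
    Fintype.card {k : ZMod q // k ≠ 0 ∧ 2 * k.val < q} = (q - 1) / 2 := by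
  have hq2 : 2 ∣ q - 1 := (Nat.Odd.sub_odd hodd odd_one).two_dvd
  have hd : 2 * ((q - 1) / 2) = q - 1 := Nat.mul_div_cancel' hq2
  have hq1 : 1 < q := hq.one_lt
  let fn : Fin ((q - 1) / 2) → {k : ZMod q // k ≠ 0 ∧ 2 * k.val < q} := fun i =>
    ⟨((i.val + 1 : ℕ) : ZMod q), by
      have hiv : i.val < (q - 1) / 2 := i.isLt
      have hlt : i.val + 1 < q := by omega
      have hv : ((i.val + 1 : ℕ) : ZMod q).val = i.val + 1 := ZMod.val_cast_of_lt hlt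
      constructor
      · intro h0
        rw [h0, ZMod.val_zero] at hv
        omega
      · rw [hv]; omega⟩
  have hbij : Function.Bijective fn := by
    constructor
    · intro i j hij
      have hi : i.val + 1 < q := by have := i.isLt; omega
      have hj : j.val + 1 < q := by have := j.isLt; omega
      have h := congrArg (fun s : {k : ZMod q // k ≠ 0 ∧ 2 * k.val < q} => (s.val).val) hij
      simp only [fn] at h
      rw [ZMod.val_cast_of_lt hi, ZMod.val_cast_of_lt hj] at h
      exact Fin.ext (by omega)
    · rintro ⟨k, hk0, hk2⟩
      have hcast : ((k.val : ℕ) : ZMod q) = k := by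
        have := ZMod.natCast_val (R := ZMod q) k
        rwa [ZMod.cast_id] at this
      have hkv : k.val ≠ 0 := fun h => hk0 (by rw [← hcast, h, Nat.cast_zero])
      refine ⟨⟨k.val - 1, by omega⟩, ?_⟩
      apply Subtype.ext
      show ((k.val - 1 + 1 : ℕ) : ZMod q) = k
      rw [Nat.sub_add_cancel (by omega)]
      exact hcast
  rw [Fintype.card_congr (Equiv.ofBijective fn hbij).symm, Fintype.card_fin]

theorem stmt2 (p q f : ℕ) (hp : p.Prime) (hq : q.Prime) (hqodd : Odd q)
    (F : Type*) [Field F] [Fintype F] (hF : Fintype.card F = p ^ f) (hF3 : 3 < p ^ f)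
    (hdvd : q ∣ p ^ f - 1)
    (B : Type*) [Group B] [IsCyclic B] (hB : Nat.card B = q) :
    Nat.card {u : (MonoidAlgebra F B)ˣ // u ∈ normUnits F B ∧
        invo F B (u : MonoidAlgebra F B) = (u : MonoidAlgebra F B)} =
      (p ^ f - 1) ^ ((q - 1) / 2) := by
  classical
  haveI : NeZero q := ⟨hq.pos.ne'⟩
  have hf0 : f ≠ 0 := by rintro rfl; simp at hF3
  haveI : Finite B := Nat.finite_of_card_ne_zero (by rw [hB]; exact hq.pos.ne')
  haveI : Fintype B := Fintype.ofFinite B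
  -- the group isomorphism
  have hcard' : Nat.card B = Nat.card (Multiplicative (ZMod q)) := by
    rw [hB, Nat.card_eq_fintype_card, Fintype.card_multiplicative, ZMod.card]
  let σ : B ≃* Multiplicative (ZMod q) := mulEquivOfCyclicCardEq hcard'
  -- the primitive root of unity
  have hcardU : Fintype.card Fˣ = p ^ f - 1 := by rw [Fintype.card_units, hF]
  obtain ⟨g, hg⟩ := IsCyclic.exists_ofOrder_eq_natCard (α := Fˣ)
  have hgord : orderOf g = p ^ f - 1 := by rw [hg, Nat.card_eq_fintype_card, hcardU]
  have hqdvd' : q ∣ orderOf g := hgord ▸ hdvd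
  have hgne : orderOf g ≠ 0 := by rw [hgord]; omega
  set ζ : Fˣ := g ^ (orderOf g / q) with hζdef
  have hζord : orderOf ζ = q := orderOf_pow_orderOf_div hgne hqdvd'
  have hζpow : (ζ : F) ^ q = 1 := by
    rw [← Units.val_pow_eq_pow_val, ← hζord, pow_orderOf_eq_one, Units.val_one]
  have hprim : IsPrimitiveRoot ((ζ : F)) q :=
    IsPrimitiveRoot.coe_units_iff.mpr (hζord ▸ IsPrimitiveRoot.orderOf ζ)
  set ψ : AddChar (ZMod q) F := AddChar.zmodChar q hζpow with hψdef
  have hψ : ψ.IsPrimitive := AddChar.zmodChar_primitive_of_primitive_root q hprim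
  -- q is invertible in F
  have hqF : (q : F) ≠ 0 := by
    intro h0
    have hrdvd : ringChar F ∣ q := (ringChar.spec F q).mp h0
    obtain ⟨n, hrp, hcard⟩ := FiniteField.card F (ringChar F)
    rw [hF] at hcard
    have hrp' : ringChar F ∣ p ^ f := hcard ▸ dvd_pow_self _ n.pos.ne'
    have hrEp : ringChar F = p := (Nat.prime_dvd_prime_iff_eq hrp hp).mp
      (hrp.dvd_of_dvd_pow hrp')
    have hqEp : q = p := ((Nat.prime_dvd_prime_iff_eq hrp hq).mp hrdvd).symm.trans hrEp
    have h1 : q ∣ p ^ f := hqEp ▸ dvd_pow_self p hf0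
    have h2 : q ∣ 1 := by
      have h3 := Nat.dvd_sub h1 hdvd
      rwa [Nat.sub_sub_self (Nat.one_le_iff_ne_zero.mpr (by positivity))] at h3
    exact hq.one_lt.ne' (Nat.dvd_one.mp h2)
  -- injectivity of the Fourier transform
  have hinj : Function.Injective (Phi σ ψ) := by
    intro x y hxy
    have hz : Phi σ ψ (x - y) = 0 := by rw [map_sub, hxy, sub_self]
    have hsub : x - y = 0 := by
      refine MonoidAlgebra.ext (Finsupp.ext fun b => ?_)
      have hi := Phi_inversion σ hψ (x - y) b
      rw [hz] at hi
      simp only [Pi.zero_apply, zero_mul, Finset.sum_const_zero] at hi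
      rcases mul_eq_zero.mp hi with h | h
      · exact absurd h hqF
      · exact h
    exact sub_eq_zero.mp hsub
  -- bijectivity by cardinality
  haveI : Fintype (MonoidAlgebra F B) := Fintype.ofEquiv (B → F) (Finsupp.equivFunOnFinite.symm.trans MonoidAlgebra.coeffEquiv.symm)
  have hbij : Function.Bijective (Phi σ ψ) := by
    rw [Fintype.bijective_iff_injective_and_card]
    refine ⟨hinj, ?_⟩
    have hc : Fintype.card (MonoidAlgebra F B) = Fintype.card (B → F) :=
      Fintype.card_congr (MonoidAlgebra.coeffEquiv.trans (Finsupp.equivFunOnFinite (α := B) (M := F)))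
    rw [hc, Fintype.card_fun, Fintype.card_fun, ZMod.card,
      ← Nat.card_eq_fintype_card (α := B), hB]
  -- aug corresponds to evaluation at 0
  have hA : ∀ x : MonoidAlgebra F B, aug F B x = Phi σ ψ x 0 := by
    have heq : aug F B = (Pi.evalAlgHom F (fun _ : ZMod q => F) 0).comp (Phi σ ψ) := by
      refine MonoidAlgebra.algHom_ext (fun b => ?_) (Subsingleton.elim _ _)
      have hl : aug F B (MonoidAlgebra.single b (1 : F)) = 1 := by
        rw [aug, MonoidAlgebra.lift_single]
        simp
      have hr : Phi σ ψ (MonoidAlgebra.single b (1 : F)) 0 = 1 := by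
        rw [show Phi σ ψ (MonoidAlgebra.single b (1 : F)) = (1 : F) • chi σ ψ b from
          MonoidAlgebra.lift_single _ _ _]
        rw [Pi.smul_apply, smul_eq_mul, chi_apply, mul_zero, AddChar.map_zero_eq_one, mul_one]
      rw [hl, AlgHom.comp_apply, Pi.evalAlgHom_apply, hr]
    intro x
    rw [heq]
    rfl
  -- translation of the defining conditions
  have hmem : ∀ u : (MonoidAlgebra F B)ˣ,
      (u ∈ normUnits F B ∧ invo F B (u : MonoidAlgebra F B) = (u : MonoidAlgebra F B)) ↔
      ((Phi σ ψ ↑u) 0 = 1 ∧ ∀ k, (Phi σ ψ ↑u) (-k) = (Phi σ ψ ↑u) k) := by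
    intro u
    have h1 : u ∈ normUnits F B ↔ (Phi σ ψ ↑u) 0 = 1 := by
      rw [normUnits, MonoidHom.mem_ker, Units.ext_iff, ← hA]
      simp
    have h2 : invo F B (u : MonoidAlgebra F B) = (u : MonoidAlgebra F B) ↔
        ∀ k, (Phi σ ψ ↑u) (-k) = (Phi σ ψ ↑u) k := by
      constructor
      · intro h k
        conv_rhs => rw [← h]
        rw [Phi_invo]
      · intro h
        apply hinj
        funext k
        rw [Phi_invo, h]
    rw [h1, h2]
  -- the algebra isomorphism and unit group equivalences
  let e : MonoidAlgebra F B ≃ₐ[F] (ZMod q → F) := AlgEquiv.ofBijective (Phi σ ψ) hbij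
  let μ : MonoidAlgebra F B ≃* (ZMod q → F) := e.toRingEquiv.toMulEquiv
  have hμ : ∀ x : MonoidAlgebra F B, μ x = Phi σ ψ x := fun x => rfl
  let E1 : {u : (MonoidAlgebra F B)ˣ // u ∈ normUnits F B ∧
        invo F B (u : MonoidAlgebra F B) = (u : MonoidAlgebra F B)} ≃
      {w : ((ZMod q → F))ˣ // (w : ZMod q → F) 0 = 1 ∧
        ∀ k, (w : ZMod q → F) (-k) = (w : ZMod q → F) k} :=
    Equiv.subtypeEquiv (Units.mapEquiv μ).toEquiv (fun u => by
      rw [hmem u]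
      exact Iff.rfl)
  let E2 : {w : ((ZMod q → F))ˣ // (w : ZMod q → F) 0 = 1 ∧
        ∀ k, (w : ZMod q → F) (-k) = (w : ZMod q → F) k} ≃
      {v : ZMod q → Fˣ // v 0 = 1 ∧ ∀ k, v (-k) = v k} :=
    Equiv.subtypeEquiv myPiUnits (fun w => by
      constructor
      · intro ⟨ha, hb⟩
        exact ⟨Units.ext ha, fun k => Units.ext (hb k)⟩
      · intro ⟨ha, hb⟩
        exact ⟨congrArg Units.val ha, fun k => congrArg Units.val (hb k)⟩)
  -- reduction to a set of representatives
  have hval : ∀ k : ZMod q, k ≠ 0 → (-k).val = q - k.val := fun k hk => by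
    rw [ZMod.neg_val, if_neg hk]
  have hvlt : ∀ k : ZMod q, k.val < q := fun k => ZMod.val_lt k
  have hvne : ∀ k : ZMod q, k ≠ 0 → k.val ≠ 0 := fun k hk h =>
    hk (by rwa [ZMod.val_eq_zero] at h)
  have hne2 : ∀ k : ZMod q, 2 * k.val ≠ q := fun k h => by
    rcases hqodd with ⟨m, hm⟩; omega
  have hnegmem : ∀ (k : ZMod q), k ≠ 0 → ¬(2 * k.val < q) →
      (-k ≠ 0 ∧ 2 * (-k).val < q) := by
    intro k h0 h2
    refine ⟨neg_ne_zero.mpr h0, ?_⟩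
    rw [hval k h0]
    have := hvlt k
    have := hvne k h0
    have := hne2 k
    omega
  let E3 : {v : ZMod q → Fˣ // v 0 = 1 ∧ ∀ k, v (-k) = v k} ≃
      ({k : ZMod q // k ≠ 0 ∧ 2 * k.val < q} → Fˣ) := by
    refine ⟨fun v i => v.val i.val, fun w => ⟨fun k =>
      if h0 : k = 0 then 1
      else if h2 : 2 * k.val < q then w ⟨k, h0, h2⟩
      else w ⟨-k, hnegmem k h0 h2⟩, ?_, ?_⟩, ?_, ?_⟩
    · simp
    · intro k
      beta_reduce
      by_cases h0 : k = 0
      · subst h0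
        simp
      · have h0' : -k ≠ 0 := neg_ne_zero.mpr h0
        rw [dif_neg h0, dif_neg h0']
        by_cases h2 : 2 * k.val < q
        · have h2' : ¬(2 * (-k).val < q) := by
            rw [hval k h0]
            have := hvlt k
            have := hvne k h0
            have := hne2 k
            omega
          rw [dif_pos h2, dif_neg h2']
          exact congrArg w (Subtype.ext (neg_neg k))
        · have h2' : 2 * (-k).val < q := (hnegmem k h0 h2).2
          rw [dif_neg h2, dif_pos h2']
    · intro v
      apply Subtype.ext
      funext k
      show (if h0 : k = 0 then (1 : Fˣ)
        else if h2 : 2 * k.val < q then v.val k else v.val (-k)) = v.val k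
      by_cases h0 : k = 0
      · rw [dif_pos h0, h0]
        exact v.2.1.symm
      · by_cases h2 : 2 * k.val < q
        · rw [dif_neg h0, dif_pos h2]
        · rw [dif_neg h0, dif_neg h2]
          exact v.2.2 k
    · intro w
      funext i
      rcases i with ⟨k, h0, h2⟩
      show (if h0' : k = 0 then 1
        else if h2' : 2 * k.val < q then w ⟨k, h0', h2'⟩
        else w ⟨-k, hnegmem k h0' h2'⟩) = w ⟨k, h0, h2⟩
      rw [dif_neg h0, dif_pos h2]
  rw [Nat.card_congr (E1.trans (E2.trans E3)), Nat.card_fun,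
    Nat.card_eq_fintype_card (α := {k : ZMod q // k ≠ 0 ∧ 2 * k.val < q}),
    card_reps hq hqodd, Nat.card_eq_fintype_card (α := Fˣ), hcardU]
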